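/- Let Ω = [[1,ρ],[ρ,1]] with |ρ| < 1 and α ∈ ℝ. If (Y₁, Y₂) ~ N₂(0, Ω), then W = α Y₁ (Y₂ - ρ Y₁) has distribution symmetric about 0, and consequently ∫_{ℝ²} 2 φ₂(z; Ω) Φ(α z₁(z₂ - ρ z₁)) dz = 1. -/

import Mathlib

open MeasureTheory Set Real

/-- If `(Y₁, Y₂) ~ N₂(0, Ω)` with correlation `ρ`, then `W = α Y₁ (Y₂ - ρ Y₁)` is
symmetric about 0, and consequently `∫ 2 φ₂(z; Ω) Φ(α z₁ (z₂ - ρ z₁)) dz = 1`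
(first density in equation (14)). -/
theorem sn_product_rho
    {Ω : Type*} [MeasurableSpace Ω] (P : Measure Ω) [IsProbabilityMeasure P]
    (ρ α : ℝ) (hρ : |ρ| < 1)
    (φ₂ : ℝ × ℝ → ℝ)
    (hφ₂ : ∀ z : ℝ × ℝ, φ₂ z =
      (2 * π * Real.sqrt (1 - ρ ^ 2))⁻¹ *
        Real.exp (-(z.1 ^ 2 - 2 * ρ * z.1 * z.2 + z.2 ^ 2) / (2 * (1 - ρ ^ 2))))
    (Φ : ℝ → ℝ)
    (hΦ : ∀ x, Φ x = ∫ t in Iic x, (Real.sqrt (2 * π))⁻¹ * Real.exp (-t ^ 2 / 2))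
    (Y₁ Y₂ : Ω → ℝ) (hY₁ : Measurable Y₁) (hY₂ : Measurable Y₂)
    (hlaw : Measure.map (fun ω => (Y₁ ω, Y₂ ω)) P =
      volume.withDensity (fun z : ℝ × ℝ => ENNReal.ofReal (φ₂ z))) :
    (Measure.map (fun ω => -(α * Y₁ ω * (Y₂ ω - ρ * Y₁ ω))) P =
        Measure.map (fun ω => α * Y₁ ω * (Y₂ ω - ρ * Y₁ ω)) P) ∧
      ∫ z : ℝ × ℝ, 2 * φ₂ z * Φ (α * z.1 * (z.2 - ρ * z.1)) = 1 := by
  -- basic facts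
  have hρ2 : (0:ℝ) < 1 - ρ ^ 2 := by
    have := abs_lt.1 hρ
    nlinarith [this.1, this.2]
  have hφ_nonneg : ∀ z, 0 ≤ φ₂ z := by
    intro z
    rw [hφ₂]
    have h1 : (0:ℝ) ≤ (2 * π * Real.sqrt (1 - ρ ^ 2))⁻¹ := by
      positivity
    exact mul_nonneg h1 (Real.exp_nonneg _)
  have hφm : Measurable φ₂ := by
    have : φ₂ = fun z : ℝ × ℝ =>
        (2 * π * Real.sqrt (1 - ρ ^ 2))⁻¹ *
          Real.exp (-(z.1 ^ 2 - 2 * ρ * z.1 * z.2 + z.2 ^ 2) / (2 * (1 - ρ ^ 2))) :=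
      funext hφ₂
    rw [this]; fun_prop
  set f : ℝ × ℝ → ENNReal := fun z => ENNReal.ofReal (φ₂ z) with hf
  have hfm : Measurable f := hφm.ennreal_ofReal
  -- the reflection T
  set T : ℝ × ℝ → ℝ × ℝ := fun z => (z.1, 2 * ρ * z.1 - z.2) with hTdef
  have hT : MeasurePreserving T (volume : Measure (ℝ × ℝ)) volume := by
    rw [show (volume : Measure (ℝ × ℝ)) = Measure.prod volume volume from rfl]
    exact (MeasurePreserving.id volume).skew_product (g := fun a c => 2 * ρ * a - c)
      (by fun_prop)
      (Filter.Eventually.of_forall fun a =>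
        (Measure.measurePreserving_sub_left volume (2 * ρ * a)).map_eq)
  have hTT : ∀ z, T (T z) = z := by
    intro z
    simp only [hTdef]
    exact Prod.ext rfl (by ring)
  let e : (ℝ × ℝ) ≃ᵐ (ℝ × ℝ) :=
    { toFun := T, invFun := T, left_inv := hTT, right_inv := hTT,
      measurable_toFun := hT.measurable, measurable_invFun := hT.measurable }
  have hφT : ∀ z, φ₂ (T z) = φ₂ z := by
    intro z
    rw [hφ₂, hφ₂]
    congr 1
    congr 1
    simp only [hTdef]
    ring
  -- invariance of the law under T
  have hμT : Measure.map T (volume.withDensity f) = volume.withDensity f := by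
    refine Measure.ext fun s hs => ?_
    rw [Measure.map_apply hT.measurable hs, withDensity_apply _ (hT.measurable hs),
      withDensity_apply _ hs]
    calc ∫⁻ z in T ⁻¹' s, f z = ∫⁻ z in T ⁻¹' s, f (T z) := by
          refine lintegral_congr fun z => ?_
          simp only [hf, hφT]
        _ = ∫⁻ z in s, f z ∂(Measure.map T volume) :=
          (setLIntegral_map hs hfm hT.measurable).symm
        _ = ∫⁻ z in s, f z := by rw [hT.map_eq]
  -- the statistic
  set g : ℝ × ℝ → ℝ := fun z => α * z.1 * (z.2 - ρ * z.1) with hgdef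
  have hgm : Measurable g := by fun_prop
  have hgT : ∀ z, g (T z) = -(g z) := by
    intro z; simp only [hgdef, hTdef]; ring
  have hpair : Measurable fun ω => (Y₁ ω, Y₂ ω) := hY₁.prodMk hY₂
  -- Part 1
  have part1 : Measure.map (fun ω => -(α * Y₁ ω * (Y₂ ω - ρ * Y₁ ω))) P =
      Measure.map (fun ω => α * Y₁ ω * (Y₂ ω - ρ * Y₁ ω)) P := by
    have h1 : Measure.map (fun ω => α * Y₁ ω * (Y₂ ω - ρ * Y₁ ω)) P =
        Measure.map g (Measure.map (fun ω => (Y₁ ω, Y₂ ω)) P) :=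
      (Measure.map_map hgm hpair).symm
    have h2 : Measure.map (fun ω => -(α * Y₁ ω * (Y₂ ω - ρ * Y₁ ω))) P =
        Measure.map (fun z => -(g z)) (Measure.map (fun ω => (Y₁ ω, Y₂ ω)) P) :=
      (Measure.map_map hgm.neg hpair).symm
    rw [h1, h2, hlaw]
    have h3 : (fun z : ℝ × ℝ => -(g z)) = g ∘ T := by
      funext z; rw [Function.comp_apply, hgT]
    rw [h3, ← Measure.map_map hgm hT.measurable, hμT]
  refine ⟨part1, ?_⟩
  -- the standard normal density on ℝ
  set ψ : ℝ → ℝ := fun t => (Real.sqrt (2 * π))⁻¹ * Real.exp (-t ^ 2 / 2) with hψdef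
  have hψ_nonneg : ∀ t, 0 ≤ ψ t := fun t => by positivity
  have hψ_int : Integrable ψ := by
    have : Integrable (fun t : ℝ => Real.exp (-(1/2 : ℝ) * t ^ 2)) :=
      integrable_exp_neg_mul_sq (by norm_num)
    have h := this.const_mul ((Real.sqrt (2 * π))⁻¹)
    refine h.congr (Filter.Eventually.of_forall fun t => ?_)
    simp only [hψdef]
    ring_nf
  have hψ_total : ∫ t, ψ t = 1 := by
    have h1 : ∫ t : ℝ, Real.exp (-(1/2 : ℝ) * t ^ 2) = Real.sqrt (π / (1/2)) :=
      integral_gaussian (1/2)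
    have h2 : ∫ t, ψ t = (Real.sqrt (2 * π))⁻¹ * ∫ t : ℝ, Real.exp (-(1/2 : ℝ) * t ^ 2) := by
      rw [← integral_const_mul]
      refine integral_congr_ae (Filter.Eventually.of_forall fun t => ?_)
      simp only [hψdef]
      ring_nf
    rw [h2, h1, show π / (1/2 : ℝ) = 2 * π by ring]
    have hsq : Real.sqrt (2 * π) ≠ 0 := by positivity
    field_simp
  have hΦ_eq : ∀ x, Φ x = ∫ t in Iic x, ψ t := hΦ
  have hΦ_mono : Monotone Φ := by
    intro x y hxy
    rw [hΦ_eq, hΦ_eq]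
    exact setIntegral_mono_set hψ_int.integrableOn
      (Filter.Eventually.of_forall hψ_nonneg)
      (HasSubset.Subset.eventuallyLE (Iic_subset_Iic.2 hxy))
  have hΦm : Measurable Φ := hΦ_mono.measurable
  have hΦ_nonneg : ∀ x, 0 ≤ Φ x := by
    intro x
    rw [hΦ_eq]
    exact setIntegral_nonneg measurableSet_Iic fun t _ => hψ_nonneg t
  have hΦ_le_one : ∀ x, Φ x ≤ 1 := by
    intro x
    rw [hΦ_eq, ← hψ_total]
    exact setIntegral_le_integral hψ_int (Filter.Eventually.of_forall hψ_nonneg)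
  have hΦ_sym : ∀ x, Φ x + Φ (-x) = 1 := by
    intro x
    have hrefl : Φ (-x) = ∫ t in Ioi x, ψ t := by
      rw [hΦ_eq]
      have : ∀ t, ψ t = ψ (-t) := by
        intro t; simp only [hψdef, neg_sq]
      calc ∫ t in Iic (-x), ψ t = ∫ t in Iic (-x), ψ (-t) := by
            exact integral_congr_ae (Filter.Eventually.of_forall fun t => this t)
        _ = ∫ t in Ioi (-(-x)), ψ t := integral_comp_neg_Iic (-x) ψ
        _ = ∫ t in Ioi x, ψ t := by rw [neg_neg]
    rw [hΦ_eq, hrefl, ← compl_Iic]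
    rw [integral_add_compl measurableSet_Iic hψ_int]
    exact hψ_total
  -- total mass of the density is 1
  have hprob : IsProbabilityMeasure (Measure.map (fun ω => (Y₁ ω, Y₂ ω)) P) :=
    Measure.isProbabilityMeasure_map hpair.aemeasurable
  have hlint : ∫⁻ z, f z = 1 := by
    have h1 : (volume.withDensity f) univ = 1 := by
      rw [← hlaw]; exact hprob.measure_univ
    rw [← setLIntegral_univ, ← withDensity_apply _ MeasurableSet.univ]
    exact h1
  have hφ_int : Integrable φ₂ := by
    refine ⟨hφm.aestronglyMeasurable, ?_⟩
    rw [hasFiniteIntegral_iff_ofReal (Filter.Eventually.of_forall hφ_nonneg)]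
    rw [hlint]
    exact ENNReal.one_lt_top
  have hint1 : ∫ z, φ₂ z = 1 := by
    rw [integral_eq_lintegral_of_nonneg_ae (Filter.Eventually.of_forall hφ_nonneg)
      hφm.aestronglyMeasurable]
    rw [hlint]; simp
  -- integrability of φ₂ * Φ(g) type functions
  have hmul_int : ∀ h : ℝ × ℝ → ℝ, Measurable h →
      Integrable (fun z => φ₂ z * Φ (h z)) := by
    intro h hh
    have : Integrable (fun z => Φ (h z) * φ₂ z) := by
      refine hφ_int.bdd_mul ((hΦm.comp hh).aestronglyMeasurable) (c := 1) (Filter.Eventually.of_forall fun z => ?_)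
      rw [Real.norm_eq_abs, abs_of_nonneg (hΦ_nonneg _)]
      exact hΦ_le_one _
    refine this.congr (Filter.Eventually.of_forall fun z => by ring)
  -- the symmetry identity for integrals
  have hsym : ∫ z, φ₂ z * Φ (-(g z)) = ∫ z, φ₂ z * Φ (g z) := by
    have h := hT.integral_comp' (f := e) (fun z => φ₂ z * Φ (g z))
    rw [← h]
    refine integral_congr_ae (Filter.Eventually.of_forall fun z => ?_)
    show φ₂ z * Φ (-(g z)) = φ₂ (T z) * Φ (g (T z))
    rw [hφT, hgT]
  -- conclude
  have hsplit : (∫ z, φ₂ z * Φ (g z)) + ∫ z, φ₂ z * Φ (-(g z)) = 1 := by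
    have hi2 : Integrable (fun z : ℝ × ℝ => φ₂ z * Φ (-(g z))) volume :=
      hmul_int (fun z => -(g z)) hgm.neg
    have hadd := integral_add (hmul_int g hgm) hi2
    calc (∫ z, φ₂ z * Φ (g z)) + ∫ z, φ₂ z * Φ (-(g z))
        = ∫ z, (φ₂ z * Φ (g z) + φ₂ z * Φ (-(g z))) := hadd.symm
      _ = ∫ z, φ₂ z := by
          refine integral_congr_ae (Filter.Eventually.of_forall fun z => ?_)
          show φ₂ z * Φ (g z) + φ₂ z * Φ (-(g z)) = φ₂ z
          rw [← mul_add, hΦ_sym, mul_one]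
      _ = 1 := hint1
  have : ∫ z : ℝ × ℝ, 2 * φ₂ z * Φ (g z) = 2 * ∫ z, φ₂ z * Φ (g z) := by
    rw [← integral_const_mul]
    refine integral_congr_ae (Filter.Eventually.of_forall fun z => by ring)
  calc ∫ z : ℝ × ℝ, 2 * φ₂ z * Φ (α * z.1 * (z.2 - ρ * z.1)) =
        2 * ∫ z, φ₂ z * Φ (g z) := this
    _ = (∫ z, φ₂ z * Φ (g z)) + ∫ z, φ₂ z * Φ (-(g z)) := by rw [hsym]; ring
    _ = 1 := hsplit
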